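/- For every finite binary sequence s ∈ {0,1}^{<ℕ}, the identity x_s² = x_{s0} x_s x_{s1} holds in Homeo(C) (products acting on the right). -/
import Mathlib


/-- The Cantor set of infinite binary sequences. -/
abbrev Cantor : Type := ℕ → Bool

/-- Concatenation of a finite binary sequence with an infinite binary sequence. -/
def cat (s : List Bool) (η : Cantor) : Cantor :=
  fun n => if h : n < s.length then s.get ⟨n, h⟩ else η (n - s.length)

/-- `s` is a (finite) prefix of the infinite sequence `ξ`. -/
def IsPrefixOf (s : List Bool) (ξ : Cantor) : Prop := ∃ η : Cantor, ξ = cat s η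

/-- The group of self-homeomorphisms of a topological space, with
`(f * g) ξ = f (g ξ)` (i.e. in the right-action convention `ξ·(g h) = (ξ·g)·h`,
the product `g * f` corresponds to the word "apply `f`, then `g`"). -/
instance {α : Type*} [TopologicalSpace α] : Group (α ≃ₜ α) where
  mul f g := g.trans f
  one := Homeomorph.refl α
  inv := Homeomorph.symm
  mul_assoc _ _ _ := Homeomorph.ext fun _ => rfl
  one_mul _ := Homeomorph.ext fun _ => rfl
  mul_one _ := Homeomorph.ext fun _ => rfl
  inv_mul_cancel f := Homeomorph.ext fun ξ => f.symm_apply_apply ξ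

@[simp] lemma homeo_mul_apply {α : Type*} [TopologicalSpace α] (f g : α ≃ₜ α) (ξ : α) :
    (f * g) ξ = f (g ξ) := rfl

@[simp] lemma homeo_one_apply {α : Type*} [TopologicalSpace α] (ξ : α) :
    (1 : α ≃ₜ α) ξ = ξ := rfl

@[simp] lemma homeo_inv_apply {α : Type*} [TopologicalSpace α] (f : α ≃ₜ α) (ξ : α) :
    (f⁻¹ : α ≃ₜ α) ξ = f.symm ξ := rfl

/-- The data of the basic homeomorphisms `x`, `y`, `x_s`, `y_s`, `p_n` of the Cantor
set, together with their recursive defining equations. -/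
structure LMData where
  x : Cantor ≃ₜ Cantor
  y : Cantor ≃ₜ Cantor
  xx : List Bool → Cantor ≃ₜ Cantor
  yy : List Bool → Cantor ≃ₜ Cantor
  p : ℕ → Cantor ≃ₜ Cantor
  hx00 : ∀ η, x (cat [false, false] η) = cat [false] η
  hx01 : ∀ η, x (cat [false, true] η) = cat [true, false] η
  hx1 : ∀ η, x (cat [true] η) = cat [true, true] η
  hy00 : ∀ η, y (cat [false, false] η) = cat [false] (y η)
  hy01 : ∀ η, y (cat [false, true] η) = cat [true, false] (y.symm η)
  hy1 : ∀ η, y (cat [true] η) = cat [true, true] (y η)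
  hxx : ∀ s η, xx s (cat s η) = cat s (x η)
  hxx' : ∀ s ξ, ¬ IsPrefixOf s ξ → xx s ξ = ξ
  hyy : ∀ s η, yy s (cat s η) = cat s (y η)
  hyy' : ∀ s ξ, ¬ IsPrefixOf s ξ → yy s ξ = ξ
  hp1 : ∀ n k η, k < n → p n (cat (List.replicate k true ++ [false]) η) =
      cat (List.replicate (k + 1) true ++ [false]) η
  hp2 : ∀ n η, p n (cat (List.replicate n true ++ [false]) η) =
      cat (List.replicate (n + 1) true) η
  hp3 : ∀ n η, p n (cat (List.replicate (n + 1) true) η) = cat [false] η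

/-- Thompson's group `T`, generated by all `x_s` and all `p_n`. -/
def Tgrp (D : LMData) : Subgroup (Cantor ≃ₜ Cantor) :=
  Subgroup.closure (Set.range D.xx ∪ Set.range D.p)

/-- The group `Ŝ`, generated by all `x_s`, all `y_s` and all `p_n`. -/
def Shat (D : LMData) : Subgroup (Cantor ≃ₜ Cantor) :=
  Subgroup.closure (Set.range D.xx ∪ Set.range D.yy ∪ Set.range D.p)

/-- The homeomorphism `y₁₀ y₁₁₀⁻¹` (right-action word: first `y₁₀`, then `y₁₁₀⁻¹`). -/
def sgen (D : LMData) : Cantor ≃ₜ Cantor :=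
  (D.yy [true, true, false])⁻¹ * D.yy [true, false]

/-- The group `S`, generated by Thompson's group `T` together with `y₁₀ y₁₁₀⁻¹`. -/
def Sgrp (D : LMData) : Subgroup (Cantor ≃ₜ Cantor) :=
  Subgroup.closure (↑(Tgrp D) ∪ {sgen D})

/-- The Lodha–Moore group `_yG_y`, generated by all `x_s` and all `y_s`. -/
def LMgrp (D : LMData) : Subgroup (Cantor ≃ₜ Cantor) :=
  Subgroup.closure (Set.range D.xx ∪ Set.range D.yy)

lemma cat_cat (s t : List Bool) (η : Cantor) : cat (s ++ t) η = cat s (cat t η) := by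
  funext n
  simp only [cat, List.length_append]
  by_cases h : n < s.length
  · rw [dif_pos (by omega), dif_pos h]
    simp [List.getElem_append, h]
  · by_cases h2 : n < s.length + t.length
    · rw [dif_pos (by omega), dif_neg h, dif_pos (by omega)]
      simp only [List.get_eq_getElem]
      rw [List.getElem_append_right (by omega)]
    · rw [dif_neg (by omega), dif_neg h, dif_neg (by omega)]
      congr 1
      omega

lemma cat_eval (s : List Bool) (η : Cantor) (n : ℕ) : cat s η (s.length + n) = η n := by
  simp only [cat]
  rw [dif_neg (by omega)]
  congr 1
  omega

lemma exists_head (η : Cantor) : ∃ ζ : Cantor, η = cat [η 0] ζ := by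
  refine ⟨fun n => η (n + 1), ?_⟩
  funext n
  cases n with
  | zero => simp [cat]
  | succ m => simp [cat]

lemma not_prefix_snoc (s : List Bool) (b : Bool) (L : List Bool) (η : Cantor) :
    ¬ IsPrefixOf (s ++ [b]) (cat s (cat ((!b) :: L) η)) := by
  rintro ⟨ζ, hζ⟩
  rw [cat_cat] at hζ
  have h0 : cat ((!b) :: L) η 0 = cat [b] ζ 0 := by
    have := congrFun hζ (s.length + 0)
    rwa [cat_eval, cat_eval] at this
  simp [cat] at h0

lemma stepS (D : LMData) (s u v : List Bool) (η : Cantor)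
    (h : D.x (cat u η) = cat v η) :
    D.xx s (cat s (cat u η)) = cat s (cat v η) := by
  rw [D.hxx, h]

lemma stepB (D : LMData) (s t u v w r : List Bool) (η : Cantor)
    (hw : w = t ++ u) (hr : r = t ++ v)
    (h : D.x (cat u η) = cat v η) :
    D.xx (s ++ t) (cat s (cat w η)) = cat s (cat r η) := by
  subst hw hr
  have e1 : cat s (cat (t ++ u) η) = cat (s ++ t) (cat u η) := by
    rw [← cat_cat, ← List.append_assoc, cat_cat]
  have e2 : cat (s ++ t) (cat v η) = cat s (cat (t ++ v) η) := by
    rw [← cat_cat, List.append_assoc, cat_cat]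
  rw [e1, D.hxx, h, e2]

lemma stepFix (D : LMData) (s : List Bool) (b : Bool) (L w : List Bool) (η : Cantor)
    (hw : w = (!b) :: L) :
    D.xx (s ++ [b]) (cat s (cat w η)) = cat s (cat w η) := by
  subst hw
  exact D.hxx' _ _ (not_prefix_snoc s b L η)

lemma x00L (D : LMData) (u : List Bool) (η : Cantor) :
    D.x (cat ([false, false] ++ u) η) = cat ([false] ++ u) η := by
  rw [cat_cat, cat_cat, D.hx00]

lemma x01L (D : LMData) (u : List Bool) (η : Cantor) :
    D.x (cat ([false, true] ++ u) η) = cat ([true, false] ++ u) η := by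
  rw [cat_cat, cat_cat, D.hx01]

lemma x1L (D : LMData) (u : List Bool) (η : Cantor) :
    D.x (cat ([true] ++ u) η) = cat ([true, true] ++ u) η := by
  rw [cat_cat, cat_cat, D.hx1]

/-- `x_s² = x_{s0} x_s x_{s1}` (right-action words; in composition
order the right-hand side is `x_{s1} ∘ x_s ∘ x_{s0}`). -/
theorem statement14 (D : LMData) (s : List Bool) :
    D.xx s * D.xx s = D.xx (s ++ [true]) * D.xx s * D.xx (s ++ [false]) := by
  apply Homeomorph.ext
  intro ξ
  simp only [homeo_mul_apply]
  by_cases hpre : IsPrefixOf s ξ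
  · obtain ⟨η, rfl⟩ := hpre
    obtain ⟨η1, hη1⟩ := exists_head η
    cases h0 : η 0
    · rw [h0] at hη1; subst hη1
      obtain ⟨η2, hη2⟩ := exists_head η1
      cases h1 : η1 0
      · rw [h1] at hη2; subst hη2
        obtain ⟨η3, hη3⟩ := exists_head η2
        cases h2 : η2 0
        · -- 000 case
          rw [h2] at hη3; subst hη3
          have e : cat [false] (cat [false] (cat [false] η3)) =
              cat [false, false, false] η3 := by rw [← cat_cat, ← cat_cat]; rfl
          rw [e]
          rw [stepS D s [false, false, false] [false, false] η3 (x00L D [false] η3),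
            stepS D s [false, false] [false] η3 (x00L D [] η3),
            stepB D s [false] [false, false] [false] [false, false, false] [false, false] η3
              rfl rfl (x00L D [] η3),
            stepS D s [false, false] [false] η3 (x00L D [] η3),
            stepFix D s true [] [false] η3 rfl]
        · -- 001 case
          rw [h2] at hη3; subst hη3
          have e : cat [false] (cat [false] (cat [true] η3)) =
              cat [false, false, true] η3 := by rw [← cat_cat, ← cat_cat]; rfl
          rw [e]
          rw [stepS D s [false, false, true] [false, true] η3 (x00L D [true] η3),
            stepS D s [false, true] [true, false] η3 (x01L D [] η3),
            stepB D s [false] [false, true] [true, false] [false, false, true]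
              [false, true, false] η3 rfl rfl (x01L D [] η3),
            stepS D s [false, true, false] [true, false, false] η3 (x01L D [false] η3),
            stepB D s [true] [false, false] [false] [true, false, false] [true, false] η3
              rfl rfl (x00L D [] η3)]
      · -- 01 case
        rw [h1] at hη2; subst hη2
        have e : cat [false] (cat [true] η2) = cat [false, true] η2 := by rw [← cat_cat]; rfl
        rw [e]
        rw [stepS D s [false, true] [true, false] η2 (x01L D [] η2),
          stepS D s [true, false] [true, true, false] η2 (x1L D [false] η2),
          stepB D s [false] [true] [true, true] [false, true] [false, true, true] η2
            rfl rfl (x1L D [] η2),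
          stepS D s [false, true, true] [true, false, true] η2 (x01L D [true] η2),
          stepB D s [true] [false, true] [true, false] [true, false, true] [true, true, false] η2
            rfl rfl (x01L D [] η2)]
    · -- 1 case
      rw [h0] at hη1; subst hη1
      rw [stepS D s [true] [true, true] η1 (x1L D [] η1),
        stepS D s [true, true] [true, true, true] η1 (x1L D [true] η1),
        stepFix D s false [] [true] η1 rfl,
        stepS D s [true] [true, true] η1 (x1L D [] η1),
        stepB D s [true] [true] [true, true] [true, true] [true, true, true] η1
          rfl rfl (x1L D [] η1)]
  · have hf : ∀ b, ¬ IsPrefixOf (s ++ [b]) ξ := by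
      rintro b ⟨ζ, hζ⟩
      exact hpre ⟨cat [b] ζ, by rwa [cat_cat] at hζ⟩
    rw [D.hxx' s ξ hpre, D.hxx' _ ξ (hf false), D.hxx' s ξ hpre, D.hxx' _ _ (hf true)]
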